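/- Let u be a standard Sturmian sequence with directive sequence z ∈ {b,β}^ℕ (containing infinitely many of each letter), i.e. u = φ_{z_0}φ_{z_1}...φ_{z_{n-1}}(u^{(n)}) for standard Sturmian sequences u^{(n)}. Then for every n, the derivated sequence of u to its n-th bispecial prefix w^{(n)} is the standard Sturmian sequence with directive sequence z_n z_{n+1} z_{n+2} ...; moreover, if z_n = b then the more frequent return word to w^{(n)} is φ_{z_0...z_{n-1}}(0) and the less frequent is φ_{z_0...z_{n-1}}(1), and if z_n = β the roles of 0 and 1 are swapped. -/

import Mathlib

/-- Words over the binary alphabet `{0,1}`, represented as `ZMod 2`. -/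
abbrev Word := List (ZMod 2)

/-- `m` is an occurrence of the word `w` in the sequence `s`. -/
def OccAt (s : ℕ → ZMod 2) (w : Word) (m : ℕ) : Prop :=
  w = List.ofFn fun i : Fin w.length => s (m + i)

/-- `w` is a factor of the sequence `s`. -/
def IsFactor (s : ℕ → ZMod 2) (w : Word) : Prop := ∃ m, OccAt s w m

/-- Factor complexity of a sequence. -/
noncomputable def Cplx (s : ℕ → ZMod 2) (n : ℕ) : ℕ :=
  {w : Word | w.length = n ∧ IsFactor s w}.ncard

/-- A Sturmian sequence: factor complexity `n + 1` for all `n`. -/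
def IsSturmian (s : ℕ → ZMod 2) : Prop := ∀ n, Cplx s n = n + 1

/-- Prepend a letter to an infinite sequence. -/
def consL (a : ZMod 2) (s : ℕ → ZMod 2) : ℕ → ZMod 2 :=
  fun n => match n with
  | 0 => a
  | k + 1 => s k

/-- A standard Sturmian sequence: both `0u` and `1u` are Sturmian. -/
def IsStandardSturmian (s : ℕ → ZMod 2) : Prop :=
  IsSturmian (consL 0 s) ∧ IsSturmian (consL 1 s)

/-- `w` is a left special factor of `s`. -/
def LeftSpecial (s : ℕ → ZMod 2) (w : Word) : Prop :=
  IsFactor s ((0 : ZMod 2) :: w) ∧ IsFactor s ((1 : ZMod 2) :: w)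

/-- `w` is a right special factor of `s`. -/
def RightSpecial (s : ℕ → ZMod 2) (w : Word) : Prop :=
  IsFactor s (w ++ [(0 : ZMod 2)]) ∧ IsFactor s (w ++ [(1 : ZMod 2)])

/-- `w` is a bispecial factor of `s`. -/
def Bispecial (s : ℕ → ZMod 2) (w : Word) : Prop :=
  LeftSpecial s w ∧ RightSpecial s w

/-- The sequence `t` is the image of `s` under the substitution `φ`. -/
def SubstImage (φ : ZMod 2 → Word) (s t : ℕ → ZMod 2) : Prop :=
  ∀ n, ∃ k, (List.ofFn fun i : Fin n => t i) <+:
              ((List.ofFn fun i : Fin k => s i).flatMap φ)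

/-- The morphism `φ_b : 0 → 0, 1 → 01`. -/
def phib (a : ZMod 2) : Word := if a = 0 then [0] else [0, 1]

/-- The morphism `φ_β : 0 → 10, 1 → 1`. -/
def phibeta (a : ZMod 2) : Word := if a = 0 then [1, 0] else [1]

/-- The elementary morphism labelled by a letter of `{b, β}` (`true = b`). -/
def phi (c : Bool) : ZMod 2 → Word := if c then phib else phibeta

/-- The composition `φ_{z₀} φ_{z₁} ⋯ φ_{z_{n-1}}`, as a substitution. -/
def compPhi (z : ℕ → Bool) : ℕ → ZMod 2 → Word
  | 0 => fun a => [a]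
  | n + 1 => fun a => (phi (z n) a).flatMap (compPhi z n)

/-- The derivated sequence of `s` to the prefix `w`. -/
noncomputable def derivated (s : ℕ → ZMod 2) (w : Word) (n : ℕ) : Word :=
  List.ofFn fun t : Fin (Nat.nth (OccAt s w) (n + 1) - Nat.nth (OccAt s w) n) =>
    s (Nat.nth (OccAt s w) n + t)

/-- Number of occurrences of the letter `a` among the first `N` letters of `s`. -/
def cnt (s : ℕ → ZMod 2) (a : ZMod 2) (N : ℕ) : ℕ :=
  ((Finset.range N).filter fun i => s i = a).card

namespace Der

lemma z2cases (a x : ZMod 2) : a = x ∨ a = x + 1 := by revert a x; decide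
lemma z2ne (x : ZMod 2) : x ≠ x + 1 := by revert x; decide

def mkl (c : Bool) : ZMod 2 := if c then 0 else 1

lemma phi_eq (c : Bool) (a : ZMod 2) :
    phi c a = if a = mkl c then [mkl c] else [mkl c, mkl c + 1] := by
  cases c <;> rcases z2cases a 0 with rfl | rfl <;> decide

lemma phi_mk (c : Bool) : phi c (mkl c) = [mkl c] := by rw [phi_eq]; simp

lemma phi_nmk {c : Bool} {a : ZMod 2} (h : a ≠ mkl c) :
    phi c a = [mkl c, mkl c + 1] := by rw [phi_eq]; simp [h]

lemma phi_len_pos (c : Bool) (a : ZMod 2) : 0 < (phi c a).length := by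
  rw [phi_eq]; split <;> simp

lemma phi_getElem_zero (c : Bool) (a : ZMod 2) (h : 0 < (phi c a).length) :
    (phi c a)[0] = mkl c := by
  rcases z2cases a (mkl c) with rfl | rfl
  · simp [phi_mk]
  · simp [phi_nmk (Ne.symm (z2ne (mkl c)))]

def pre (s : ℕ → ZMod 2) (n : ℕ) : Word := List.ofFn fun i : Fin n => s i

@[simp] lemma pre_length (s : ℕ → ZMod 2) (n : ℕ) : (pre s n).length = n := by
  simp [pre]

lemma pre_getElem (s : ℕ → ZMod 2) (n i : ℕ) (h : i < (pre s n).length) :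
    (pre s n)[i] = s i := by simp [pre]

lemma pre_zero (s : ℕ → ZMod 2) : pre s 0 = [] := by simp [pre]

lemma pre_succ (s : ℕ → ZMod 2) (n : ℕ) : pre s (n + 1) = pre s n ++ [s n] := by
  apply List.ext_getElem (by simp)
  intro i h1 h2
  simp only [pre_getElem]
  rcases Nat.lt_or_ge i n with h | h
  · rw [List.getElem_append_left (by simpa using h), pre_getElem]
  · have : i = n := by simp at h1; omega
    subst this
    rw [List.getElem_append_right (by simp)]
    simp

lemma pre_prefix (s : ℕ → ZMod 2) {m n : ℕ} (h : m ≤ n) : pre s m <+: pre s n := by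
  induction n with
  | zero => simp at h; simp [h]
  | succ k ih =>
    rcases Nat.lt_or_ge m (k+1) with h' | h'
    · exact (ih (by omega)).trans (by rw [pre_succ]; exact List.prefix_append _ _)
    · have : m = k + 1 := by omega
      simp [this]

/-- Occurrence characterization. -/
lemma occ_iff {s : ℕ → ZMod 2} {w : Word} {m : ℕ} :
    OccAt s w m ↔ ∀ i (hi : i < w.length), w[i] = s (m + i) := by
  constructor
  · intro h i hi
    rw [List.getElem_of_eq h hi]
    simp
  · intro h
    apply List.ext_getElem (by simp)
    intro i h1 h2
    rw [h i h1]
    simp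

lemma occ_nil (s : ℕ → ZMod 2) (m : ℕ) : OccAt s [] m := by
  simp [OccAt]

lemma occ_append {s : ℕ → ZMod 2} {w₁ w₂ : Word} {m : ℕ} :
    OccAt s (w₁ ++ w₂) m ↔ OccAt s w₁ m ∧ OccAt s w₂ (m + w₁.length) := by
  simp only [occ_iff]
  constructor
  · intro h
    refine ⟨fun i hi => ?_, fun i hi => ?_⟩
    · have := h i (by simp; omega)
      rwa [List.getElem_append_left hi] at this
    · have := h (w₁.length + i) (by simp; omega)
      rw [List.getElem_append_right (by omega)] at this
      simpa [Nat.add_assoc] using this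
  · intro ⟨h1, h2⟩ i hi
    rcases Nat.lt_or_ge i w₁.length with h | h
    · rw [List.getElem_append_left h]; exact h1 i h
    · rw [List.getElem_append_right h]
      have := h2 (i - w₁.length) (by simp at hi; omega)
      rw [this]; congr 1; omega

lemma occ_singleton {s : ℕ → ZMod 2} {a : ZMod 2} {m : ℕ} :
    OccAt s [a] m ↔ a = s m := by
  simp [occ_iff]

lemma occ_cons {s : ℕ → ZMod 2} {a : ZMod 2} {w : Word} {m : ℕ} :
    OccAt s (a :: w) m ↔ a = s m ∧ OccAt s w (m + 1) := by
  have : a :: w = [a] ++ w := rfl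
  rw [this, occ_append, occ_singleton]
  simp

lemma occ_pre (s : ℕ → ZMod 2) (n : ℕ) : OccAt s (pre s n) 0 := by
  rw [occ_iff]
  intro i hi
  rw [pre_getElem]
  simp

def lam (c : Bool) (s : ℕ → ZMod 2) (k : ℕ) : ℕ := ((pre s k).flatMap (phi c)).length

def PImg (c : Bool) (s t : ℕ → ZMod 2) : Prop :=
  ∀ k, pre t (lam c s k) = (pre s k).flatMap (phi c)

lemma lam_zero (c : Bool) (s : ℕ → ZMod 2) : lam c s 0 = 0 := by
  simp [lam, pre_zero]

lemma lam_succ (c : Bool) (s : ℕ → ZMod 2) (k : ℕ) :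
    lam c s (k + 1) = lam c s k + (phi c (s k)).length := by
  simp [lam, pre_succ, List.flatMap_append]

lemma lam_lt_succ (c : Bool) (s : ℕ → ZMod 2) (k : ℕ) : lam c s k < lam c s (k + 1) := by
  rw [lam_succ]
  have := phi_len_pos c (s k)
  omega

lemma lam_strictMono (c : Bool) (s : ℕ → ZMod 2) : StrictMono (lam c s) :=
  strictMono_nat_of_lt_succ (lam_lt_succ c s)

lemma le_lam (c : Bool) (s : ℕ → ZMod 2) (k : ℕ) : k ≤ lam c s k := by
  induction k with
  | zero => simp
  | succ n ih => have := lam_lt_succ c s n; omega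

lemma exists_block (c : Bool) (s : ℕ → ZMod 2) (p : ℕ) :
    ∃ k, lam c s k ≤ p ∧ p < lam c s (k + 1) := by
  induction p with
  | zero => exact ⟨0, by simp [lam_zero], by have := lam_lt_succ c s 0; simp [lam_zero] at this ⊢; omega⟩
  | succ n ih =>
    obtain ⟨k, h1, h2⟩ := ih
    rcases Nat.lt_or_ge (n + 1) (lam c s (k + 1)) with h | h
    · exact ⟨k, by omega, h⟩
    · have : n + 1 = lam c s (k + 1) := by omega
      exact ⟨k + 1, by omega, by have := lam_lt_succ c s (k + 1); omega⟩

section PImgFacts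

variable {c : Bool} {s t : ℕ → ZMod 2} (h : PImg c s t)

include h

lemma block_val (k i : ℕ) (hi : i < (phi c (s k)).length) :
    t (lam c s k + i) = (phi c (s k))[i] := by
  have hk := h (k + 1)
  have hlen : lam c s k + i < lam c s (k + 1) := by rw [lam_succ]; omega
  have hidx : lam c s k + i < (pre t (lam c s (k+1))).length := by simpa using hlen
  have e1 : (pre t (lam c s (k+1)))[lam c s k + i]'hidx = t (lam c s k + i) :=
    pre_getElem _ _ _ _
  have e2 := List.getElem_of_eq hk hidx
  rw [← e1, e2]
  have hsp : (pre s (k+1)).flatMap (phi c) = (pre s k).flatMap (phi c) ++ phi c (s k) := by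
    rw [pre_succ, List.flatMap_append]; simp
  rw [List.getElem_of_eq hsp]
  rw [List.getElem_append_right (by have : (List.flatMap (phi c) (pre s k)).length = lam c s k := rfl; omega)]
  have hl : (List.flatMap (phi c) (pre s k)).length = lam c s k := rfl
  simp [hl]

lemma t_lam (k : ℕ) : t (lam c s k) = mkl c := by
  have := block_val h k 0 (phi_len_pos c (s k))
  rw [phi_getElem_zero] at this
  simpa using this

omit h in
lemma lam_succ_of_eq {k : ℕ} (hk : s k = mkl c) : lam c s (k + 1) = lam c s k + 1 := by
  rw [lam_succ, hk, phi_mk]; simp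

omit h in
lemma lam_succ_of_ne {k : ℕ} (hk : s k ≠ mkl c) : lam c s (k + 1) = lam c s k + 2 := by
  rw [lam_succ, phi_nmk hk]; simp

lemma t_lam_one_of_ne {k : ℕ} (hk : s k ≠ mkl c) : t (lam c s k + 1) = mkl c + 1 := by
  have h2 := block_val h k 1 (by rw [phi_nmk hk]; simp)
  rw [h2]
  simp [phi_nmk hk]

omit h in
lemma classify (p : ℕ) :
    (∃ k, p = lam c s k) ∨ (∃ k, p = lam c s k + 1 ∧ s k ≠ mkl c) := by
  obtain ⟨k, h1, h2⟩ := exists_block c s p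
  rcases Nat.eq_or_lt_of_le h1 with he | hlt
  · exact Or.inl ⟨k, he.symm⟩
  · right
    have hne : s k ≠ mkl c := by
      intro hk
      rw [lam_succ_of_eq hk] at h2
      omega
    have h3 := lam_succ_of_ne hne
    exact ⟨k, by omega, hne⟩

lemma t_mk_iff (p : ℕ) : t p = mkl c ↔ ∃ k, p = lam c s k := by
  constructor
  · intro hp
    rcases classify (c := c) (s := s) p with hc | ⟨k, rfl, hk⟩
    · exact hc
    · rw [t_lam_one_of_ne h hk] at hp
      exact absurd hp.symm (z2ne _)
  · rintro ⟨k, rfl⟩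
    exact t_lam h k

lemma t_after (p : ℕ) (hp : t p = mkl c + 1) : t (p + 1) = mkl c := by
  rcases classify (c := c) (s := s) p with ⟨k, rfl⟩ | ⟨k, rfl, hk⟩
  · rw [t_lam h k] at hp
    exact absurd hp (z2ne _)
  · have h2 : lam c s (k + 1) = lam c s k + 2 := lam_succ_of_ne hk
    have : lam c s k + 1 + 1 = lam c s (k + 1) := by omega
    rw [this, t_lam h]

end PImgFacts


lemma flatMapB_head (c : Bool) (w : Word) :
    ∃ r, w.flatMap (phi c) ++ [mkl c] = mkl c :: r := by
  cases w with
  | nil => exact ⟨[], rfl⟩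
  | cons a w' =>
    have hq : ∃ q, phi c a = mkl c :: q := by
      rcases z2cases a (mkl c) with rfl | rfl
      · exact ⟨[], phi_mk c⟩
      · exact ⟨[mkl c + 1], phi_nmk (Ne.symm (z2ne _))⟩
    obtain ⟨q, hq⟩ := hq
    exact ⟨q ++ w'.flatMap (phi c) ++ [mkl c], by simp [List.flatMap_cons, hq]⟩

section Sync

variable {c : Bool} {s t : ℕ → ZMod 2} (h : PImg c s t)

include h

lemma occ_fwd (w : Word) : ∀ k, OccAt s w k →
    OccAt t (w.flatMap (phi c)) (lam c s k) ∧
      lam c s (k + w.length) = lam c s k + (w.flatMap (phi c)).length := by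
  induction w with
  | nil => intro k _; simpa using occ_nil t (lam c s k)
  | cons a w' ih =>
    intro k hk
    rw [occ_cons] at hk
    obtain ⟨ha, hw⟩ := hk
    subst ha
    obtain ⟨h1, h2⟩ := ih (k + 1) hw
    have hls := lam_succ c s k
    refine ⟨?_, ?_⟩
    · rw [List.flatMap_cons, occ_append]
      refine ⟨?_, ?_⟩
      · rw [occ_iff]
        intro i hi
        exact (block_val h k i hi).symm
      · have he : lam c s k + (phi c (s k)).length = lam c s (k + 1) := by omega
        rw [he]
        exact h1
    · have he : k + (s k :: w').length = (k + 1) + w'.length := by simp; omega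
      rw [he, h2]
      simp only [List.flatMap_cons, List.length_append]
      omega

lemma occ_fwdB (w : Word) (k : ℕ) (hk : OccAt s w k) :
    OccAt t (w.flatMap (phi c) ++ [mkl c]) (lam c s k) := by
  obtain ⟨h1, h2⟩ := occ_fwd h w k hk
  rw [occ_append]
  refine ⟨h1, ?_⟩
  rw [occ_singleton]
  have he : lam c s k + (w.flatMap (phi c)).length = lam c s (k + w.length) := by omega
  rw [he, t_lam h]

lemma occ_bwd (w : Word) : ∀ k, OccAt t (w.flatMap (phi c) ++ [mkl c]) (lam c s k) →
    OccAt s w k ∧ lam c s (k + w.length) = lam c s k + (w.flatMap (phi c)).length := by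
  induction w with
  | nil => intro k _; simpa using occ_nil s k
  | cons a w' ih =>
    intro k hocc
    rw [List.flatMap_cons, List.append_assoc, occ_append] at hocc
    obtain ⟨hblk, hrest⟩ := hocc
    rcases z2cases a (mkl c) with rfl | rfl
    · rw [phi_mk] at hblk hrest
      have hsk : s k = mkl c := by
        by_contra hne
        have h1 : t (lam c s k + 1) = mkl c + 1 := t_lam_one_of_ne h hne
        obtain ⟨r, hr⟩ := flatMapB_head c w'
        rw [hr, occ_cons] at hrest
        have h2 := hrest.1
        simp only [List.length_cons, List.length_nil] at h2
        rw [h1] at h2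
        exact z2ne _ h2
      have hl1 : lam c s (k + 1) = lam c s k + 1 := lam_succ_of_eq hsk
      have hrest' : OccAt t (w'.flatMap (phi c) ++ [mkl c]) (lam c s (k + 1)) := by
        rw [hl1]
        simpa using hrest
      obtain ⟨hw, hlen⟩ := ih (k + 1) hrest'
      refine ⟨?_, ?_⟩
      · rw [occ_cons]
        exact ⟨hsk.symm, hw⟩
      · have he : k + (mkl c :: w').length = (k + 1) + w'.length := by simp; omega
        rw [he, hlen]
        simp only [List.flatMap_cons, List.length_append, phi_mk]
        simp
        omega
    · rw [phi_nmk (Ne.symm (z2ne _))] at hblk hrest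
      rw [occ_iff] at hblk
      have h1 : t (lam c s k + 1) = mkl c + 1 := by
        have := hblk 1 (by simp)
        simpa using this.symm
      have hsk : s k ≠ mkl c := by
        intro he
        have h2 : lam c s (k + 1) = lam c s k + 1 := lam_succ_of_eq he
        have h3 := t_lam h (k + 1)
        rw [h2] at h3
        rw [h3] at h1
        exact z2ne _ h1
      have hskv : s k = mkl c + 1 := (z2cases (s k) (mkl c)).resolve_left hsk
      have hl2 : lam c s (k + 1) = lam c s k + 2 := lam_succ_of_ne hsk
      have hrest' : OccAt t (w'.flatMap (phi c) ++ [mkl c]) (lam c s (k + 1)) := by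
        rw [hl2]
        simpa using hrest
      obtain ⟨hw, hlen⟩ := ih (k + 1) hrest'
      refine ⟨?_, ?_⟩
      · rw [occ_cons]
        exact ⟨hskv.symm, hw⟩
      · have he : k + ((mkl c + 1) :: w').length = (k + 1) + w'.length := by simp; omega
        rw [he, hlen]
        simp only [List.flatMap_cons, List.length_append, phi_nmk (Ne.symm (z2ne (mkl c)))]
        simp
        omega

lemma occ_aligned (w : Word) (m : ℕ) (hm : OccAt t (w.flatMap (phi c) ++ [mkl c]) m) :
    ∃ k, m = lam c s k := by
  obtain ⟨r, hr⟩ := flatMapB_head c w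
  rw [hr, occ_cons] at hm
  exact (t_mk_iff h m).mp hm.1.symm

lemma occB_iff (w : Word) (m : ℕ) :
    OccAt t (w.flatMap (phi c) ++ [mkl c]) m ↔ ∃ k, m = lam c s k ∧ OccAt s w k := by
  constructor
  · intro hm
    obtain ⟨k, rfl⟩ := occ_aligned h w m hm
    exact ⟨k, rfl, (occ_bwd h w k hm).1⟩
  · rintro ⟨k, rfl, hk⟩
    exact occ_fwdB h w k hk

end Sync

section Trans

variable {c : Bool} {s t : ℕ → ZMod 2} (h : PImg c s t)

include h

lemma fac_A (w : Word) (hf : IsFactor s (w ++ [mkl c])) :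
    IsFactor t ((w.flatMap (phi c) ++ [mkl c]) ++ [mkl c]) := by
  obtain ⟨k, hk⟩ := hf
  refine ⟨lam c s k, ?_⟩
  have := occ_fwdB h (w ++ [mkl c]) k hk
  simpa [List.flatMap_append, List.flatMap_cons, phi_mk, List.append_assoc] using this

lemma fac_B (w : Word) (hf : IsFactor s (w ++ [mkl c + 1])) :
    IsFactor t ((w.flatMap (phi c) ++ [mkl c]) ++ [mkl c + 1]) := by
  obtain ⟨k, hk⟩ := hf
  refine ⟨lam c s k, ?_⟩
  have := (occ_fwd h (w ++ [mkl c + 1]) k hk).1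
  simpa [List.flatMap_append, List.flatMap_cons, phi_nmk (Ne.symm (z2ne (mkl c))),
    List.append_assoc] using this

lemma fac_C (w : Word) (hf : IsFactor s (mkl c :: w)) :
    IsFactor t (mkl c :: (w.flatMap (phi c) ++ [mkl c])) := by
  obtain ⟨k, hk⟩ := hf
  refine ⟨lam c s k, ?_⟩
  have hocc := occ_fwdB h (mkl c :: w) k hk
  have he : (mkl c :: w).flatMap (phi c) ++ [mkl c]
      = mkl c :: (w.flatMap (phi c) ++ [mkl c]) := by
    simp [List.flatMap_cons, phi_mk]
  rwa [he] at hocc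

lemma fac_D (w : Word) (hf : IsFactor s ((mkl c + 1) :: w)) :
    IsFactor t ((mkl c + 1) :: (w.flatMap (phi c) ++ [mkl c])) := by
  obtain ⟨k, hk⟩ := hf
  have hocc := occ_fwdB h ((mkl c + 1) :: w) k hk
  have he : ((mkl c + 1) :: w).flatMap (phi c) ++ [mkl c]
      = mkl c :: ((mkl c + 1) :: (w.flatMap (phi c) ++ [mkl c])) := by
    simp [List.flatMap_cons, phi_nmk (Ne.symm (z2ne (mkl c)))]
  rw [he] at hocc
  exact ⟨lam c s k + 1, (occ_cons.mp hocc).2⟩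

lemma fac_A' (w : Word) (hf : IsFactor t ((w.flatMap (phi c) ++ [mkl c]) ++ [mkl c])) :
    IsFactor s (w ++ [mkl c]) := by
  obtain ⟨m, hm⟩ := hf
  rw [occ_append] at hm
  obtain ⟨hB, hx⟩ := hm
  obtain ⟨k, rfl⟩ := occ_aligned h w m hB
  obtain ⟨hw, hlen⟩ := occ_bwd h w k hB
  rw [occ_singleton] at hx
  have hpos : lam c s k + (w.flatMap (phi c) ++ [mkl c]).length
      = lam c s (k + w.length) + 1 := by
    simp only [List.length_append, List.length_cons, List.length_nil]
    omega
  rw [hpos] at hx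
  have hsk : s (k + w.length) = mkl c := by
    by_contra hne
    rw [t_lam_one_of_ne h hne] at hx
    exact z2ne _ hx
  refine ⟨k, ?_⟩
  rw [occ_append, occ_singleton]
  exact ⟨hw, by simpa using hsk.symm⟩

lemma fac_B' (w : Word) (hf : IsFactor t ((w.flatMap (phi c) ++ [mkl c]) ++ [mkl c + 1])) :
    IsFactor s (w ++ [mkl c + 1]) := by
  obtain ⟨m, hm⟩ := hf
  rw [occ_append] at hm
  obtain ⟨hB, hx⟩ := hm
  obtain ⟨k, rfl⟩ := occ_aligned h w m hB
  obtain ⟨hw, hlen⟩ := occ_bwd h w k hB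
  rw [occ_singleton] at hx
  have hpos : lam c s k + (w.flatMap (phi c) ++ [mkl c]).length
      = lam c s (k + w.length) + 1 := by
    simp only [List.length_append, List.length_cons, List.length_nil]
    omega
  rw [hpos] at hx
  have hne : s (k + w.length) ≠ mkl c := by
    intro he
    have h2 : lam c s (k + w.length + 1) = lam c s (k + w.length) + 1 := lam_succ_of_eq he
    have h3 := t_lam h (k + w.length + 1)
    rw [h2] at h3
    rw [h3] at hx
    exact z2ne _ hx.symm
  have hsk : s (k + w.length) = mkl c + 1 := (z2cases _ _).resolve_left hne
  refine ⟨k, ?_⟩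
  rw [occ_append, occ_singleton]
  exact ⟨hw, by simpa using hsk.symm⟩

lemma fac_C' (w : Word) (hf : IsFactor t (mkl c :: (w.flatMap (phi c) ++ [mkl c]))) :
    IsFactor s (mkl c :: w) := by
  obtain ⟨m, hm⟩ := hf
  rw [occ_cons] at hm
  obtain ⟨hm0, hB⟩ := hm
  obtain ⟨k, hk⟩ := occ_aligned h w (m + 1) hB
  obtain ⟨j, rfl⟩ := (t_mk_iff h m).mp hm0.symm
  have hjlt : j < k := by
    have h1 : lam c s j < lam c s k := by omega
    exact (lam_strictMono c s).lt_iff_lt.mp h1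
  have hsj : s j = mkl c := by
    by_contra hne
    have h2 := lam_succ_of_ne (c := c) (s := s) hne
    have hle : lam c s (j + 1) ≤ lam c s k := (lam_strictMono c s).monotone (by omega)
    omega
  have hj1 : lam c s (j + 1) = lam c s k := by
    rw [lam_succ_of_eq hsj]
    omega
  have hjk1 : j + 1 = k := (lam_strictMono c s).injective hj1
  subst hjk1
  have hB' : OccAt t (w.flatMap (phi c) ++ [mkl c]) (lam c s (j + 1)) := by
    rwa [← hk]
  obtain ⟨hw, _⟩ := occ_bwd h w (j + 1) hB'
  exact ⟨j, by rw [occ_cons]; exact ⟨hsj.symm, hw⟩⟩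

lemma fac_D' (w : Word) (hf : IsFactor t ((mkl c + 1) :: (w.flatMap (phi c) ++ [mkl c]))) :
    IsFactor s ((mkl c + 1) :: w) := by
  obtain ⟨m, hm⟩ := hf
  rw [occ_cons] at hm
  obtain ⟨hm0, hB⟩ := hm
  obtain ⟨k, hk⟩ := occ_aligned h w (m + 1) hB
  rcases classify (c := c) (s := s) m with ⟨j, rfl⟩ | ⟨j, rfl, hj⟩
  · rw [t_lam h] at hm0
    exact absurd hm0.symm (z2ne _)
  · have h2 := lam_succ_of_ne (c := c) (s := s) hj
    have hj1 : lam c s (j + 1) = lam c s k := by omega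
    have hjk1 : j + 1 = k := (lam_strictMono c s).injective hj1
    subst hjk1
    have hB' : OccAt t (w.flatMap (phi c) ++ [mkl c]) (lam c s (j + 1)) := by
      rwa [← hk]
    obtain ⟨hw, _⟩ := occ_bwd h w (j + 1) hB'
    have hsj : s j = mkl c + 1 := (z2cases _ _).resolve_left hj
    exact ⟨j, by rw [occ_cons]; exact ⟨hsj.symm, hw⟩⟩

lemma last_mk (w₁ : Word) (x : ZMod 2)
    (hf : IsFactor t ((w₁ ++ [x]) ++ [mkl c + 1])) : x = mkl c := by
  obtain ⟨m, hm⟩ := hf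
  rw [List.append_assoc, occ_append, occ_append, occ_singleton, occ_singleton] at hm
  obtain ⟨_, hx1, hx2⟩ := hm
  rcases z2cases x (mkl c) with rfl | rfl
  · rfl
  · exfalso
    have := t_after h _ hx1.symm
    simp only [List.length_cons, List.length_nil] at hx2
    rw [← Nat.add_assoc] at hx2
    rw [this] at hx2
    exact z2ne _ hx2.symm

lemma pre_decomp (l : ℕ) (hlast : t l = mkl c) :
    ∃ j, l = lam c s j ∧ pre t (l + 1) = (pre s j).flatMap (phi c) ++ [mkl c] := by
  obtain ⟨j, rfl⟩ := (t_mk_iff h l).mp hlast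
  refine ⟨j, rfl, ?_⟩
  rw [pre_succ, h j, hlast]

end Trans

/-! ### Composed morphisms and towers -/

def shift (z : ℕ → Bool) : ℕ → Bool := fun n => z (n + 1)

def BZ : (ℕ → Bool) → ℕ → Word
  | _, 0 => []
  | z, n + 1 => ((BZ (shift z) n).flatMap (phi (z 0))) ++ [mkl (z 0)]

lemma compPhi_one (z : ℕ → Bool) (a : ZMod 2) : compPhi z 1 a = phi (z 0) a := by
  show (phi (z 0) a).flatMap (compPhi z 0) = _
  have : compPhi z 0 = fun a : ZMod 2 => [a] := rfl
  rw [this, List.flatMap_singleton']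

lemma compPhi_len_pos (z : ℕ → Bool) (n : ℕ) (a : ZMod 2) :
    0 < (compPhi z n a).length := by
  induction n generalizing a with
  | zero => simp [compPhi]
  | succ n ih =>
    show 0 < ((phi (z n) a).flatMap (compPhi z n)).length
    obtain ⟨q, hq⟩ : ∃ q, phi (z n) a = mkl (z n) :: q := by
      rcases z2cases a (mkl (z n)) with rfl | rfl
      · exact ⟨[], phi_mk _⟩
      · exact ⟨[mkl (z n) + 1], phi_nmk (Ne.symm (z2ne _))⟩
    rw [hq, List.flatMap_cons, List.length_append]
    have := ih (mkl (z n))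
    omega

lemma compPhi_shift (n : ℕ) : ∀ (z : ℕ → Bool) (a : ZMod 2),
    compPhi z (n + 1) a = (compPhi (shift z) n a).flatMap (phi (z 0)) := by
  induction n with
  | zero =>
    intro z a
    rw [compPhi_one]
    show _ = [a].flatMap (phi (z 0))
    rw [List.flatMap_singleton]
  | succ n ih =>
    intro z a
    show (phi (z (n + 1)) a).flatMap (compPhi z (n + 1)) = _
    have e1 : compPhi z (n + 1) = fun b => (compPhi (shift z) n b).flatMap (phi (z 0)) := by
      funext b; exact ih z b
    rw [e1, ← List.flatMap_assoc]
    show ((phi (shift z n) a).flatMap (compPhi (shift z) n)).flatMap (phi (z 0)) = _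
    rfl

def lamN (z : ℕ → Bool) (n : ℕ) (s : ℕ → ZMod 2) (k : ℕ) : ℕ :=
  ((pre s k).flatMap (compPhi z n)).length

def PImgN (z : ℕ → Bool) (n : ℕ) (s t : ℕ → ZMod 2) : Prop :=
  ∀ k, pre t (lamN z n s k) = (pre s k).flatMap (compPhi z n)

lemma lamN_zero_eq (z : ℕ → Bool) (s : ℕ → ZMod 2) (k : ℕ) : lamN z 0 s k = k := by
  have : compPhi z 0 = fun a : ZMod 2 => [a] := rfl
  simp [lamN, this, List.flatMap_singleton']

lemma PImgN_zero_self (z : ℕ → Bool) (s : ℕ → ZMod 2) : PImgN z 0 s s := by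
  intro k
  have : compPhi z 0 = fun a : ZMod 2 => [a] := rfl
  rw [lamN_zero_eq, this, List.flatMap_singleton']

lemma PImgN_zero_eq {z : ℕ → Bool} {s t : ℕ → ZMod 2} (h : PImgN z 0 s t) : s = t := by
  funext p
  have hk := h (p + 1)
  have : compPhi z 0 = fun a : ZMod 2 => [a] := rfl
  rw [lamN_zero_eq, this, List.flatMap_singleton'] at hk
  have e1 := List.getElem_of_eq hk (show p < (pre t (p + 1)).length by simp)
  rw [pre_getElem, pre_getElem] at e1
  exact e1.symm

lemma lamN_succ (z : ℕ → Bool) (n : ℕ) (s : ℕ → ZMod 2) (k : ℕ) :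
    lamN z n s (k + 1) = lamN z n s k + (compPhi z n (s k)).length := by
  simp [lamN, pre_succ, List.flatMap_append]

lemma lamN_strictMono (z : ℕ → Bool) (n : ℕ) (s : ℕ → ZMod 2) :
    StrictMono (lamN z n s) := by
  apply strictMono_nat_of_lt_succ
  intro k
  rw [lamN_succ]
  have := compPhi_len_pos z n (s k)
  omega

lemma le_lamN (z : ℕ → Bool) (n : ℕ) (s : ℕ → ZMod 2) (k : ℕ) : k ≤ lamN z n s k := by
  induction k with
  | zero => simp
  | succ m ih =>
    have := lamN_strictMono z n s (lt_add_one m)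
    omega

lemma lamN_zero_k (z : ℕ → Bool) (n : ℕ) (s : ℕ → ZMod 2) : lamN z n s 0 = 0 := by
  simp [lamN, pre_zero]

lemma flatMap_prefix {l₁ l₂ : Word} (f : ZMod 2 → Word) (h : l₁ <+: l₂) :
    l₁.flatMap f <+: l₂.flatMap f := by
  obtain ⟨r, rfl⟩ := h
  rw [List.flatMap_append]
  exact List.prefix_append _ _

lemma PImgN_of_subst {z : ℕ → Bool} {n : ℕ} {s u : ℕ → ZMod 2}
    (h : SubstImage (compPhi z n) s u) : PImgN z n s u := by
  intro k
  obtain ⟨k', hk'⟩ := h (lamN z n s k)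
  have hk'' : pre u (lamN z n s k) <+: (pre s k').flatMap (compPhi z n) := hk'
  have hkk' : k ≤ k' := by
    by_contra hlt
    push_neg at hlt
    have h1 : lamN z n s k' < lamN z n s k := lamN_strictMono z n s hlt
    have h2 := hk''.length_le
    have h3 : ((pre s k').flatMap (compPhi z n)).length = lamN z n s k' := rfl
    simp only [pre_length, h3] at h2
    omega
  have hpre2 : (pre s k).flatMap (compPhi z n) <+: (pre s k').flatMap (compPhi z n) :=
    flatMap_prefix _ (pre_prefix s hkk')
  have hfin : pre u (lamN z n s k) <+: (pre s k).flatMap (compPhi z n) :=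
    List.prefix_of_prefix_length_le hk'' hpre2 (by simp [lamN])
  exact hfin.eq_of_length (by simp [lamN])

def pimg (c : Bool) (s : ℕ → ZMod 2) : ℕ → ZMod 2 :=
  fun p => ((pre s (p + 1)).flatMap (phi c)).getD p 0

lemma prefix_getD {l₁ l₂ : Word} (h : l₁ <+: l₂) {i : ℕ} (hi : i < l₁.length) :
    l₁.getD i 0 = l₂.getD i 0 := by
  obtain ⟨r, rfl⟩ := h
  exact (List.getD_append _ _ _ _ hi).symm

lemma pimg_spec (c : Bool) (s : ℕ → ZMod 2) : PImg c s (pimg c s) := by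
  intro k
  apply List.ext_getElem (by simp [lam])
  intro i h1 h2
  rw [pre_getElem]
  show pimg c s i = _
  unfold pimg
  have hi : i < lam c s k := by simpa using h1
  have hprel : ((pre s (i+1)).flatMap (phi c)).length = lam c s (i+1) := rfl
  have hil : i < ((pre s (i+1)).flatMap (phi c)).length := by
    rw [hprel]
    have := le_lam c s (i + 1)
    omega
  rcases Nat.le_total (i + 1) k with hle | hle
  · have hp : (pre s (i+1)).flatMap (phi c) <+: (pre s k).flatMap (phi c) :=
      flatMap_prefix _ (pre_prefix s hle)
    rw [prefix_getD hp hil]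
    rw [List.getD_eq_getElem _ _ h2]
  · have hp : (pre s k).flatMap (phi c) <+: (pre s (i+1)).flatMap (phi c) :=
      flatMap_prefix _ (pre_prefix s hle)
    rw [← prefix_getD hp (by exact h2)]
    rw [List.getD_eq_getElem _ _ h2]

lemma s_det {c : Bool} {s t : ℕ → ZMod 2} (h : PImg c s t) (k : ℕ) :
    s k = mkl c ↔ t (lam c s k + 1) = mkl c := by
  constructor
  · intro he
    have := t_lam h (k + 1)
    rwa [lam_succ_of_eq he] at this
  · intro ht
    by_contra hne
    rw [t_lam_one_of_ne h hne] at ht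
    exact z2ne _ ht.symm

lemma PImg_unique {c : Bool} {s s' t : ℕ → ZMod 2}
    (h : PImg c s t) (h' : PImg c s' t) : s = s' := by
  have lameq : ∀ k, lam c s k = lam c s' k := by
    intro k
    induction k with
    | zero => rw [lam_zero, lam_zero]
    | succ k ih =>
      have hiff : (s k = mkl c) ↔ (s' k = mkl c) := by
        rw [s_det h k, s_det h' k, ih]
      by_cases he : s k = mkl c
      · rw [lam_succ_of_eq he, lam_succ_of_eq (hiff.mp he), ih]
      · rw [lam_succ_of_ne he, lam_succ_of_ne (fun hc => he (hiff.mpr hc)), ih]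
  funext k
  have hiff : (s k = mkl c) ↔ (s' k = mkl c) := by
    rw [s_det h k, s_det h' k, lameq k]
  rcases z2cases (s k) (mkl c) with he | he <;> rcases z2cases (s' k) (mkl c) with he' | he'
  · rw [he, he']
  · exact absurd (hiff.mp he) (by rw [he']; exact Ne.symm (z2ne _))
  · exact absurd (hiff.mpr he') (by rw [he]; exact Ne.symm (z2ne _))
  · rw [he, he']

lemma peel_inner {z : ℕ → Bool} {n : ℕ} {s t : ℕ → ZMod 2}
    (h : PImgN z (n + 1) s t) : PImgN z n (pimg (z n) s) t := by
  intro m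
  set y := pimg (z n) s with hy
  have hys : PImg (z n) s y := pimg_spec (z n) s
  set k := m with hk
  have hmk : m ≤ lam (z n) s k := le_lam _ _ _
  have e1 : (pre y (lam (z n) s k)).flatMap (compPhi z n)
      = pre t (lamN z (n + 1) s k) := by
    rw [hys k, h k]
    rw [List.flatMap_assoc]
    rfl
  have hpre : (pre y m).flatMap (compPhi z n) <+: pre t (lamN z (n + 1) s k) := by
    rw [← e1]
    exact flatMap_prefix _ (pre_prefix y hmk)
  have hlen : lamN z n y m ≤ lamN z (n + 1) s k := by
    have := hpre.length_le
    simpa [lamN] using this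
  have hpt : pre t (lamN z n y m) <+: pre t (lamN z (n + 1) s k) := pre_prefix t hlen
  have := List.prefix_of_prefix_length_le hpt hpre (by simp [lamN])
  exact this.eq_of_length (by simp [lamN])

lemma PImgN_unique : ∀ (n : ℕ) (z : ℕ → Bool) (s s' t : ℕ → ZMod 2),
    PImgN z n s t → PImgN z n s' t → s = s' := by
  intro n
  induction n with
  | zero =>
    intro z s s' t h h'
    rw [PImgN_zero_eq h, PImgN_zero_eq h']
  | succ n ih =>
    intro z s s' t h h'
    have e := ih z _ _ t (peel_inner h) (peel_inner h')
    exact PImg_unique (pimg_spec (z n) s) (e ▸ pimg_spec (z n) s')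

lemma PImgN_tower {z : ℕ → Bool} {v : ℕ → ℕ → ZMod 2}
    (h1 : ∀ j, PImg (z j) (v (j + 1)) (v j)) :
    ∀ n, PImgN z n (v n) (v 0) := by
  intro n
  induction n with
  | zero => exact PImgN_zero_self z (v 0)
  | succ n ih =>
    intro k
    have e1 : (pre (v (n + 1)) k).flatMap (compPhi z (n + 1))
        = (pre (v n) (lam (z n) (v (n + 1)) k)).flatMap (compPhi z n) := by
      rw [h1 n k]
      rw [List.flatMap_assoc]
      rfl
    have e2 := ih (lam (z n) (v (n + 1)) k)
    rw [e1, ← e2]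
    congr 1
    show ((pre (v (n+1)) k).flatMap (compPhi z (n+1))).length = _
    rw [e1]
    rfl

/-! ### Bispecial transfer -/

lemma bispecial_iff (s : ℕ → ZMod 2) (w : Word) (x : ZMod 2) :
    Bispecial s w ↔ (IsFactor s (x :: w) ∧ IsFactor s ((x + 1) :: w)
      ∧ IsFactor s (w ++ [x]) ∧ IsFactor s (w ++ [x + 1])) := by
  simp only [Bispecial, LeftSpecial, RightSpecial]
  rcases z2cases x 0 with rfl | rfl
  · have h01 : (0 : ZMod 2) + 1 = 1 := by decide
    rw [h01]
    tauto
  · have h01 : (0 : ZMod 2) + 1 = 1 := by decide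
    have h10 : (1 : ZMod 2) + 1 = 0 := by decide
    rw [h01, h10]
    tauto

section Trans2

variable {c : Bool} {s t : ℕ → ZMod 2} (h : PImg c s t)

include h

lemma bispecial_transfer (w : Word) (hw : Bispecial s w) :
    Bispecial t (w.flatMap (phi c) ++ [mkl c]) := by
  rw [bispecial_iff s w (mkl c)] at hw
  obtain ⟨hC, hD, hA, hB⟩ := hw
  rw [bispecial_iff t _ (mkl c)]
  exact ⟨fac_C h w hC, fac_D h w hD, fac_A h w hA, fac_B h w hB⟩

lemma bispecial_transfer' (w : Word) (hw : Bispecial t (w.flatMap (phi c) ++ [mkl c])) :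
    Bispecial s w := by
  rw [bispecial_iff t _ (mkl c)] at hw
  obtain ⟨hC, hD, hA, hB⟩ := hw
  rw [bispecial_iff s w (mkl c)]
  exact ⟨fac_C' h w hC, fac_D' h w hD, fac_A' h w hA, fac_B' h w hB⟩

end Trans2

/-! ### The explicit bispecial prefixes -/

lemma bz_pre_bis : ∀ (n : ℕ) (z : ℕ → Bool) (v : ℕ → ℕ → ZMod 2),
    (∀ j, PImg (z j) (v (j + 1)) (v j)) → (∀ j a, ∃ p, v j p = a) →
    BZ z n = pre (v 0) (BZ z n).length ∧ Bispecial (v 0) (BZ z n) := by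
  intro n
  induction n with
  | zero =>
    intro z v h1 h2
    obtain ⟨p0, hp0⟩ := h2 0 0
    obtain ⟨p1, hp1⟩ := h2 0 1
    have f0 : IsFactor (v 0) [(0 : ZMod 2)] := ⟨p0, by rw [occ_singleton]; exact hp0.symm⟩
    have f1 : IsFactor (v 0) [(1 : ZMod 2)] := ⟨p1, by rw [occ_singleton]; exact hp1.symm⟩
    exact ⟨by rw [show BZ z 0 = [] from rfl]; simp [pre_zero], ⟨⟨f0, f1⟩, ⟨f0, f1⟩⟩⟩
  | succ n ih =>
    intro z v h1 h2
    obtain ⟨hp, hb⟩ := ih (shift z) (fun i => v (i + 1)) (fun i => h1 (i + 1)) (fun i => h2 (i + 1))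
    have hbz : BZ z (n + 1) = (BZ (shift z) n).flatMap (phi (z 0)) ++ [mkl (z 0)] := rfl
    constructor
    · set L := (BZ (shift z) n).length with hL
      have e0 := (h1 0) L
      rw [← hp] at e0
      have emk : v 0 (lam (z 0) (v 1) L) = mkl (z 0) := t_lam (h1 0) _
      have efin : pre (v 0) (lam (z 0) (v 1) L + 1)
          = (BZ (shift z) n).flatMap (phi (z 0)) ++ [mkl (z 0)] := by
        rw [pre_succ, e0, emk]
      have elen : ((BZ (shift z) n).flatMap (phi (z 0)) ++ [mkl (z 0)]).length
          = lam (z 0) (v 1) L + 1 := by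
        rw [List.length_append]
        have : ((BZ (shift z) n).flatMap (phi (z 0))).length = lam (z 0) (v 1) L := by
          rw [hp]
          rfl
        rw [this]
        rfl
      rw [hbz, elen, ← efin]
    · rw [hbz]
      exact bispecial_transfer (h1 0) _ hb

lemma bz_all : ∀ (l : ℕ) (z : ℕ → Bool) (v : ℕ → ℕ → ZMod 2),
    (∀ j, PImg (z j) (v (j + 1)) (v j)) →
    ∀ w : Word, w.length = l → w = pre (v 0) w.length → Bispecial (v 0) w →
    ∃ n, w = BZ z n := by
  intro l
  induction l using Nat.strong_induction_on with
  | _ l ih =>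
    intro z v h1 w hl hpre hbis
    rcases Nat.eq_zero_or_pos l with rfl | hpos
    · exact ⟨0, List.length_eq_zero_iff.mp hl⟩
    have hne : w ≠ [] := by
      intro hww
      rw [hww] at hl
      simp at hl
      omega
    have hfac : IsFactor (v 0) (w ++ [mkl (z 0) + 1]) := by
      have := (bispecial_iff (v 0) w (mkl (z 0))).mp hbis
      exact this.2.2.2
    have hcat : w.dropLast ++ [w.getLast hne] = w := List.dropLast_append_getLast hne
    have hx : w.getLast hne = mkl (z 0) := by
      apply last_mk (h1 0) w.dropLast
      rw [hcat]
      exact hfac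
    have hval : v 0 (w.length - 1) = mkl (z 0) := by
      have h2 := List.getElem_of_eq hpre (show w.length - 1 < w.length by omega)
      rw [pre_getElem] at h2
      have h3 := List.getLast_eq_getElem hne
      rw [hx] at h3
      rw [← h2, ← h3]
    obtain ⟨j, hj, hdec⟩ := pre_decomp (h1 0) (w.length - 1) hval
    have hlen1 : w.length - 1 + 1 = w.length := by omega
    have hw' : w = (pre (v 1) j).flatMap (phi (z 0)) ++ [mkl (z 0)] := by
      calc w = pre (v 0) w.length := hpre
        _ = pre (v 0) (w.length - 1 + 1) := by rw [hlen1]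
        _ = _ := hdec
    have hbis1 : Bispecial (v 1) (pre (v 1) j) := by
      apply bispecial_transfer' (h1 0)
      rw [← hw']
      exact hbis
    have hjl : j < l := by
      have := le_lam (z 0) (v (0 + 1)) j
      omega
    obtain ⟨n, hn⟩ := ih j hjl (shift z) (fun i => v (i + 1)) (fun i => h1 (i + 1))
      (pre (v 1) j) (by simp) (by rw [pre_length]) hbis1
    refine ⟨n + 1, ?_⟩
    rw [hw', hn]
    rfl

lemma bz_chain : ∀ (n : ℕ) (z : ℕ → Bool),
    BZ z n <+: BZ z (n + 1) ∧ (BZ z n).length < (BZ z (n + 1)).length := by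
  intro n
  induction n with
  | zero =>
    intro z
    refine ⟨List.nil_prefix, ?_⟩
    show ([] : Word).length < ((BZ (shift z) 0).flatMap (phi (z 0)) ++ [mkl (z 0)]).length
    simp [BZ]
  | succ n ih =>
    intro z
    obtain ⟨hpre, hlen⟩ := ih (shift z)
    obtain ⟨r, hr⟩ := hpre
    have hrne : r ≠ [] := by
      intro h0
      rw [h0, List.append_nil] at hr
      rw [← hr] at hlen
      omega
    obtain ⟨a, r', rfl⟩ := List.exists_cons_of_ne_nil hrne
    obtain ⟨q, hq⟩ : ∃ q, phi (z 0) a = mkl (z 0) :: q := by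
      rcases z2cases a (mkl (z 0)) with rfl | rfl
      · exact ⟨[], phi_mk _⟩
      · exact ⟨[mkl (z 0) + 1], phi_nmk (Ne.symm (z2ne _))⟩
    have hsplit : (BZ (shift z) (n + 1)).flatMap (phi (z 0))
        = (BZ (shift z) n).flatMap (phi (z 0)) ++ (phi (z 0) a ++ r'.flatMap (phi (z 0))) := by
      rw [← hr, List.flatMap_append, List.flatMap_cons]
    constructor
    · show (BZ (shift z) n).flatMap (phi (z 0)) ++ [mkl (z 0)]
        <+: (BZ (shift z) (n + 1)).flatMap (phi (z 0)) ++ [mkl (z 0)]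
      rw [hsplit, hq]
      have e : ((BZ (shift z) n).flatMap (phi (z 0)) ++ ((mkl (z 0) :: q) ++ r'.flatMap (phi (z 0)))) ++ [mkl (z 0)]
          = (BZ (shift z) n).flatMap (phi (z 0)) ++ (mkl (z 0) :: (q ++ (r'.flatMap (phi (z 0)) ++ [mkl (z 0)]))) := by
        simp
      rw [e, List.prefix_append_right_inj]
      exact ⟨q ++ (r'.flatMap (phi (z 0)) ++ [mkl (z 0)]), rfl⟩
    · show ((BZ (shift z) n).flatMap (phi (z 0)) ++ [mkl (z 0)]).length
        < ((BZ (shift z) (n + 1)).flatMap (phi (z 0)) ++ [mkl (z 0)]).length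
      rw [hsplit]
      simp only [List.length_append, List.length_cons, List.length_nil]
      have := phi_len_pos (z 0) a
      omega

lemma bz_len_strictMono (z : ℕ → Bool) : StrictMono (fun n => (BZ z n).length) :=
  strictMono_nat_of_lt_succ (fun n => (bz_chain n z).2)

lemma bz_occ : ∀ (n : ℕ) (z : ℕ → Bool) (v : ℕ → ℕ → ZMod 2),
    (∀ j, PImg (z j) (v (j + 1)) (v j)) →
    ∀ m, OccAt (v 0) (BZ z n) m ↔ ∃ k, m = lamN z n (v n) k := by
  intro n
  induction n with
  | zero =>
    intro z v h1 m
    constructor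
    · intro _
      exact ⟨m, (lamN_zero_eq z (v 0) m).symm⟩
    · intro _
      exact occ_nil _ _
  | succ n ih =>
    intro z v h1 m
    have hocc : OccAt (v 0) ((BZ (shift z) n).flatMap (phi (z 0)) ++ [mkl (z 0)]) m ↔
        ∃ k, m = lam (z 0) (v 1) k ∧ OccAt (v 1) (BZ (shift z) n) k :=
      occB_iff (h1 0) (BZ (shift z) n) m
    have ihs : ∀ m, OccAt (v 1) (BZ (shift z) n) m ↔ ∃ k, m = lamN (shift z) n (v (n + 1)) k :=
      ih (shift z) (fun i => v (i + 1)) (fun i => h1 (i + 1))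
    have hPN : PImgN (shift z) n (v (n + 1)) (v 1) :=
      PImgN_tower (z := shift z) (v := fun i => v (i + 1)) (fun i => h1 (i + 1)) n
    have hcomp : ∀ k, lam (z 0) (v 1) (lamN (shift z) n (v (n + 1)) k)
        = lamN z (n + 1) (v (n + 1)) k := by
      intro k
      have e2 : compPhi z (n + 1) = fun a => (compPhi (shift z) n a).flatMap (phi (z 0)) := by
        funext a
        exact compPhi_shift n z a
      have e1 : (pre (v (n + 1)) k).flatMap (compPhi z (n + 1))
          = (pre (v 1) (lamN (shift z) n (v (n + 1)) k)).flatMap (phi (z 0)) := by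
        rw [e2, ← List.flatMap_assoc, ← hPN k]
      calc lam (z 0) (v 1) (lamN (shift z) n (v (n + 1)) k)
          = ((pre (v 1) (lamN (shift z) n (v (n + 1)) k)).flatMap (phi (z 0))).length := rfl
        _ = ((pre (v (n + 1)) k).flatMap (compPhi z (n + 1))).length := by rw [e1]
        _ = lamN z (n + 1) (v (n + 1)) k := rfl
    rw [show BZ z (n + 1) = (BZ (shift z) n).flatMap (phi (z 0)) ++ [mkl (z 0)] from rfl]
    rw [hocc]
    constructor
    · rintro ⟨k, rfl, hk⟩
      obtain ⟨j, rfl⟩ := (ihs k).mp hk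
      exact ⟨j, hcomp j⟩
    · rintro ⟨j, rfl⟩
      exact ⟨lamN (shift z) n (v (n + 1)) j, (hcomp j).symm, (ihs _).mpr ⟨j, rfl⟩⟩

/-! ### Frequency -/

lemma freq {c : Bool} {s t : ℕ → ZMod 2} (h : PImg c s t) (hocc : ∃ p, s p = mkl c) :
    ∃ N₀, ∀ N, N₀ ≤ N → cnt t (mkl c + 1) N < cnt t (mkl c) N := by
  classical
  obtain ⟨p, hp⟩ := hocc
  set q := lam c s p with hq
  have hq0 : t q = mkl c := t_lam h p
  have hq1 : t (q + 1) = mkl c := by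
    have e := lam_succ_of_eq (c := c) (s := s) hp
    have h2 := t_lam h (p + 1)
    rw [e] at h2
    exact h2
  have hzero : t 0 = mkl c := by
    have := t_lam h 0
    rwa [lam_zero] at this
  have hpos1 : ∀ i, t i = mkl c + 1 → 1 ≤ i := by
    intro i hiv
    rcases Nat.eq_zero_or_pos i with rfl | hi
    · rw [hzero] at hiv
      exact absurd hiv (z2ne _)
    · omega
  refine ⟨q + 2, fun N hN => ?_⟩
  have hmaps : ∀ i ∈ (Finset.range N).filter (fun i => t i = mkl c + 1),
      i - 1 ∈ ((Finset.range N).filter (fun i => t i = mkl c)).erase q := by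
    intro i hi
    simp only [Finset.mem_filter, Finset.mem_range] at hi
    obtain ⟨hiN, hiv⟩ := hi
    have hi1 : 1 ≤ i := hpos1 i hiv
    have hprev : t (i - 1) = mkl c := by
      rcases classify (c := c) (s := s) i with ⟨k, hk⟩ | ⟨k, hk, hkk⟩
      · rw [hk, t_lam h] at hiv
        exact absurd hiv (z2ne _)
      · have : i - 1 = lam c s k := by omega
        rw [this, t_lam h]
    have hne_q : i - 1 ≠ q := by
      intro he
      have : i = q + 1 := by omega
      rw [this, hq1] at hiv
      exact absurd hiv (z2ne _)
    simp only [Finset.mem_erase, Finset.mem_filter, Finset.mem_range]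
    exact ⟨hne_q, by omega, hprev⟩
  have hinj : Set.InjOn (fun i => i - 1)
      ((Finset.range N).filter (fun i => t i = mkl c + 1)) := by
    intro i hi j hj he
    simp only [Finset.coe_filter, Set.mem_setOf_eq, Finset.mem_range] at hi hj
    have := hpos1 i hi.2
    have := hpos1 j hj.2
    simp only at he
    omega
  have hcard := Finset.card_le_card_of_injOn _ hmaps hinj
  have hqmem : q ∈ (Finset.range N).filter (fun i => t i = mkl c) := by
    simp only [Finset.mem_filter, Finset.mem_range]
    exact ⟨by omega, hq0⟩
  have herase := Finset.card_erase_of_mem hqmem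
  have hcardpos : 1 ≤ ((Finset.range N).filter (fun i => t i = mkl c)).card :=
    Finset.card_pos.mpr ⟨q, hqmem⟩
  unfold cnt
  omega

/-! ### Both letters occur -/

lemma letter_factor {t : ℕ → ZMod 2} (ht : IsSturmian t) (a : ZMod 2) :
    IsFactor t [a] := by
  have h2 := ht 1
  unfold Cplx at h2
  have hsub : {w : Word | w.length = 1 ∧ IsFactor t w}
      ⊆ {[(0 : ZMod 2)], [(1 : ZMod 2)]} := by
    rintro w ⟨hw1, _⟩
    match w, hw1 with
    | [x], _ =>
      rcases z2cases x 0 with rfl | rfl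
      · left; rfl
      · right
        have : (0 : ZMod 2) + 1 = 1 := by decide
        rw [this]
        exact rfl
    | [], h => simp at h
  have hfin : ({[(0 : ZMod 2)], [(1 : ZMod 2)]} : Set Word).Finite :=
    (Set.finite_singleton _).insert _
  have hcard : ({[(0 : ZMod 2)], [(1 : ZMod 2)]} : Set Word).ncard = 2 :=
    Set.ncard_pair (by decide)
  have heq : {w : Word | w.length = 1 ∧ IsFactor t w}
      = {[(0 : ZMod 2)], [(1 : ZMod 2)]} :=
    Set.eq_of_subset_of_ncard_le hsub (by rw [hcard, h2]) hfin
  have hmem : [a] ∈ {w : Word | w.length = 1 ∧ IsFactor t w} := by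
    rw [heq]
    rcases z2cases a 0 with rfl | rfl
    · left; rfl
    · right
      have : (0 : ZMod 2) + 1 = 1 := by decide
      rw [this]
      exact rfl
  exact hmem.2

lemma both_letters {s : ℕ → ZMod 2} (hs : IsStandardSturmian s) (a : ZMod 2) :
    ∃ p, s p = a := by
  obtain ⟨h0, h1⟩ := hs
  have key : ∀ x : ZMod 2, a ≠ x → IsFactor (consL x s) [a] → ∃ p, s p = a := by
    intro x hne hf
    obtain ⟨m, hm⟩ := hf
    rw [occ_singleton] at hm
    cases m with
    | zero => exact absurd hm hne
    | succ p => exact ⟨p, hm.symm⟩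
  rcases z2cases a 0 with rfl | rfl
  · exact key 1 (by decide) (letter_factor h1 0)
  · have e : (0 : ZMod 2) + 1 = 1 := by decide
    rw [e]
    exact key 0 (by decide) (letter_factor h0 1)

/-! ### Nat.nth of a strictly monotone range -/

lemma nth_of_range {g : ℕ → ℕ} (hg : StrictMono g) (p : ℕ → Prop) [DecidablePred p]
    (hp : ∀ m, p m ↔ ∃ k, m = g k) (m : ℕ) : Nat.nth p m = g m := by
  have hgm : p (g m) := (hp (g m)).mpr ⟨m, rfl⟩
  have hcount : Nat.count p (g m) = m := by
    rw [Nat.count_eq_card_filter_range]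
    have he : (Finset.range (g m)).filter p = (Finset.range m).image g := by
      ext i
      simp only [Finset.mem_filter, Finset.mem_range, Finset.mem_image]
      constructor
      · rintro ⟨hi, hpi⟩
        obtain ⟨k, rfl⟩ := (hp i).mp hpi
        exact ⟨k, hg.lt_iff_lt.mp hi, rfl⟩
      · rintro ⟨k, hk, rfl⟩
        exact ⟨hg hk, (hp _).mpr ⟨k, rfl⟩⟩
    rw [he, Finset.card_image_of_injective _ hg.injective, Finset.card_range]
  have hfin := Nat.nth_count hgm
  rw [hcount] at hfin
  exact hfin

end Der


open Der in
/-- let `u` be a standard Sturmian sequence with directive sequence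
`z ∈ {b,β}^ℕ` (infinitely many of each letter), i.e. `u = φ_{z₀⋯z_{n-1}}(u⁽ⁿ⁾)` with
`u⁽ⁿ⁾` standard Sturmian. Then for every `n`, the derivated sequence of `u` to its
`n`-th bispecial prefix `w⁽ⁿ⁾` is the standard Sturmian sequence `u⁽ⁿ⁾` (which has
directive sequence `zₙz_{n+1}⋯`), realized by: the `m`-th return word in the
factorization of `u` is `φ_{z₀⋯z_{n-1}}` applied to the `m`-th letter of `u⁽ⁿ⁾`;
moreover if `zₙ = b` the more frequent return word is `φ_{z₀⋯z_{n-1}}(0)` (letter `0`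
is eventually more frequent in `u⁽ⁿ⁾`), and if `zₙ = β` the roles are swapped. -/
theorem derivated_of_standard (z : ℕ → Bool) (u : ℕ → ZMod 2)
    (usn : ℕ → ℕ → ZMod 2)
    (hinfb : ∀ N, ∃ n, N ≤ n ∧ z n = true)
    (hinfβ : ∀ N, ∃ n, N ≤ n ∧ z n = false)
    (hstd : ∀ n, IsStandardSturmian (usn n))
    (himg : ∀ n, SubstImage (compPhi z n) (usn n) u)
    (W : ℕ → Word)
    (hWpref : ∀ n, W n = List.ofFn fun i : Fin (W n).length => u i)
    (hWbis : ∀ n, Bispecial u (W n))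
    (hWmono : StrictMono fun n => (W n).length)
    (hWall : ∀ w : Word, (w = List.ofFn fun i : Fin w.length => u i) →
        Bispecial u w → ∃ n, w = W n) :
    ∀ n, (∀ m, derivated u (W n) m = compPhi z n (usn n m)) ∧
      (z n = true → ∃ N₀, ∀ N, N₀ ≤ N → cnt (usn n) 1 N < cnt (usn n) 0 N) ∧
      (z n = false → ∃ N₀, ∀ N, N₀ ≤ N → cnt (usn n) 0 N < cnt (usn n) 1 N) := by
  classical
  have hPN : ∀ n, PImgN z n (usn n) u := fun n => PImgN_of_subst (himg n)
  have hu : usn 0 = u := PImgN_zero_eq (hPN 0)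
  subst hu
  have h1 : ∀ j, PImg (z j) (usn (j + 1)) (usn j) := by
    intro j
    have e : pimg (z j) (usn (j + 1)) = usn j :=
      PImgN_unique j z _ _ (usn 0) (peel_inner (hPN (j + 1))) (hPN j)
    rw [← e]
    exact pimg_spec _ _
  have h2 : ∀ j (a : ZMod 2), ∃ p, usn j p = a := fun j a => both_letters (hstd j) a
  have hWbz : ∀ n, W n = BZ z n := by
    have hgex : ∀ n, ∃ k, W n = BZ z k := fun n =>
      bz_all (W n).length z usn h1 (W n) rfl (hWpref n) (hWbis n)
    have hfex : ∀ k, ∃ m, BZ z k = W m := by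
      intro k
      obtain ⟨hbp, hbb⟩ := bz_pre_bis k z usn h1 h2
      exact hWall (BZ z k) hbp hbb
    choose g hg using hgex
    choose f hf using hfex
    have hglt : StrictMono g := by
      intro a b hab
      have hl : (BZ z (g a)).length < (BZ z (g b)).length := by
        rw [← hg a, ← hg b]
        exact hWmono hab
      exact (bz_len_strictMono z).lt_iff_lt.mp hl
    have hflt : StrictMono f := by
      intro a b hab
      have hl : (W (f a)).length < (W (f b)).length := by
        rw [← hf a, ← hf b]
        exact bz_len_strictMono z hab
      exact hWmono.lt_iff_lt.mp hl
    have hfg : ∀ n, f (g n) = n := by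
      intro n
      have e1 : W (f (g n)) = W n := by rw [← hf (g n), ← hg n]
      have e2 : (W (f (g n))).length = (W n).length := by rw [e1]
      exact hWmono.injective e2
    intro n
    have hgn : g n = n := by
      have ha : n ≤ g n := hglt.le_apply
      have hb : g n ≤ f (g n) := hflt.le_apply
      rw [hfg n] at hb
      omega
    rw [hg n, hgn]
  intro n
  have hocc : ∀ m, OccAt (usn 0) (W n) m ↔ ∃ k, m = lamN z n (usn n) k := by
    intro m
    rw [hWbz n]
    exact bz_occ n z usn h1 m
  have hnth : ∀ m, Nat.nth (OccAt (usn 0) (W n)) m = lamN z n (usn n) m :=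
    fun m => nth_of_range (lamN_strictMono z n (usn n)) _ hocc m
  refine ⟨?_, ?_, ?_⟩
  · intro m
    have hd : derivated (usn 0) (W n) m
        = pre (fun i => usn 0 (lamN z n (usn n) m + i))
            (lamN z n (usn n) (m + 1) - lamN z n (usn n) m) := by
      unfold derivated pre
      simp only [hnth]
      apply List.ext_getElem (by simp)
      intro i hh1 hh2
      simp
    rw [hd]
    have hlen : lamN z n (usn n) (m + 1) - lamN z n (usn n) m
        = (compPhi z n (usn n m)).length := by
      rw [lamN_succ]
      omega
    apply List.ext_getElem (by simp [hlen])
    intro i hi1 hi2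
    rw [pre_getElem]
    have hiD : i < (compPhi z n (usn n m)).length := hi2
    have hb : lamN z n (usn n) m + i < lamN z n (usn n) (m + 1) := by
      rw [lamN_succ]
      omega
    have e3 := List.getElem_of_eq (hPN n (m + 1))
      (show lamN z n (usn n) m + i < (pre (usn 0) (lamN z n (usn n) (m + 1))).length by
        rw [pre_length]; exact hb)
    rw [pre_getElem] at e3
    show usn 0 (lamN z n (usn n) m + i) = _
    rw [e3]
    have hsp : (pre (usn n) (m + 1)).flatMap (compPhi z n)
        = (pre (usn n) m).flatMap (compPhi z n) ++ compPhi z n (usn n m) := by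
      rw [pre_succ, List.flatMap_append]
      simp
    have hfl : ((pre (usn n) m).flatMap (compPhi z n)).length = lamN z n (usn n) m := rfl
    rw [List.getElem_of_eq hsp]
    rw [List.getElem_append_right (by rw [hfl]; omega)]
    simp [hfl]
  · intro hz
    have hfq := freq (h1 n) (h2 (n + 1) (mkl (z n)))
    have h01 : (0 : ZMod 2) + 1 = 1 := by decide
    simp only [hz, mkl, if_true, h01] at hfq
    exact hfq
  · intro hz
    have hfq := freq (h1 n) (h2 (n + 1) (mkl (z n)))
    have h11 : (1 : ZMod 2) + 1 = 0 := by decide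
    simp only [hz, mkl, Bool.false_eq_true, if_false, h11] at hfq
    exact hfq
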